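/- Let X be a real vector space equipped with, for each n ∈ ℕ and x ∈ Xⁿ, a linear map Φ_x : H_n → X satisfying Φ_x(π_i) = x_i and the composition rule Φ_{(Φ_x(f₁),…,Φ_x(f_m))}(g) = Φ_x(g ∘ (f₁ × ⋯ × f_m)). Define a relation on X by x ≤ y iff σ(x,y) = y, where σ ∈ H₂ is σ(t₁,t₂) = max(t₁,t₂) and σ(x,y) denotes Φ_{(x,y)}(σ). Then ≤ is a partial order on X. -/
import Mathlib


/-- `H_n`: positively homogeneous continuous functions `ℝⁿ → ℝ`. -/
def MemHn {n : ℕ} (f : (Fin n → ℝ) → ℝ) : Prop :=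
  Continuous f ∧ ∀ (c : ℝ), 0 ≤ c → ∀ t, f (c • t) = c * f t

/-- the `i`-th coordinate projection, an element of `H_n`. -/
def projFn (n : ℕ) (i : Fin n) : (Fin n → ℝ) → ℝ := fun t => t i

section VL
variable {X : Type*} [Lattice X] [AddCommGroup X] [Module ℝ X]

/-- A vector lattice homomorphism `H_n → X`, encoded as a map on all functions
that is linear and sup-preserving on members of `H_n`. -/
def IsVLHomHn {n : ℕ} (Φ : ((Fin n → ℝ) → ℝ) → X) : Prop :=
  (∀ f g, MemHn f → MemHn g → Φ (f + g) = Φ f + Φ g) ∧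
  (∀ (c : ℝ) f, MemHn f → Φ (c • f) = c • Φ f) ∧
  (∀ f g, MemHn f → MemHn g → Φ (f ⊔ g) = Φ f ⊔ Φ g)

/-- The order ideal generated by `e`. -/
def Ie (e : X) : Set X := {x | ∃ l : ℝ, 0 ≤ l ∧ |x| ≤ l • e}

/-- `‖x‖_e = inf {λ ≥ 0 : |x| ≤ λ e}`. -/
noncomputable def enorm (e x : X) : ℝ := sInf {l : ℝ | 0 ≤ l ∧ |x| ≤ l • e}

/-- A sublattice and linear subspace. -/
def IsSubl (S : Set X) : Prop :=
  (0 : X) ∈ S ∧ (∀ a ∈ S, ∀ b ∈ S, a + b ∈ S) ∧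
  (∀ (c : ℝ), ∀ a ∈ S, c • a ∈ S) ∧ (∀ a ∈ S, ∀ b ∈ S, a ⊔ b ∈ S)

/-- `S` is closed in the carrier `C` with respect to the `‖·‖_e`-distance. -/
def ClosedIn (e : X) (C S : Set X) : Prop :=
  ∀ x ∈ C, (∀ ε : ℝ, 0 < ε → ∃ y ∈ S, enorm e (x - y) < ε) → x ∈ S

/-- The closed sublattice of `C` generated by the set `A`. -/
def genClosedSubl (e : X) (C A : Set X) : Set X :=
  ⋂₀ {S : Set X | S ⊆ C ∧ A ⊆ S ∧ IsSubl S ∧ ClosedIn e C S}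

/-- The norm `‖·‖_e` is complete on `S`: every `‖·‖_e`-Cauchy sequence in `S`
converges, in `‖·‖_e`, to an element of `S`. -/
def CompleteOn (e : X) (S : Set X) : Prop :=
  ∀ u : ℕ → X, (∀ k, u k ∈ S) →
    (∀ ε : ℝ, 0 < ε → ∃ N, ∀ m ≥ N, ∀ n ≥ N, enorm e (u m - u n) < ε) →
    ∃ x ∈ S, ∀ ε : ℝ, 0 < ε → ∃ N, ∀ m ≥ N, enorm e (u m - x) < ε

end VL

/-- An Archimedean vector lattice. -/
def IsArchimedeanVL (X : Type*) [Lattice X] [AddCommGroup X] : Prop :=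
  ∀ x y : X, 0 ≤ x → 0 ≤ y → (∀ n : ℕ, n • x ≤ y) → x = 0

/-- The pointwise-maximum function `σ(t₁,t₂) = t₁ ∨ t₂`, an element of `H₂`. -/
noncomputable def sigmaMax : (Fin 2 → ℝ) → ℝ := fun t => max (t 0) (t 1)


lemma memHn_proj {n : ℕ} (i : Fin n) : MemHn (projFn n i) := by
  refine ⟨continuous_apply i, ?_⟩
  intro c hc t
  simp [projFn]

lemma memHn_max {n : ℕ} (i j : Fin n) : MemHn (fun t => max (t i) (t j)) := by
  refine ⟨(continuous_apply i).max (continuous_apply j), ?_⟩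
  intro c hc t
  simp [Pi.smul_apply, smul_eq_mul, mul_max_of_nonneg _ _ hc]

lemma memHn_sigma : MemHn sigmaMax := memHn_max 0 1

/-- given a vector space `X` with linear maps `Φ_x : H_n → X`
satisfying the projection and composition rules, the relation
`x ≤ y ⇔ σ(x,y) = y` is a partial order on `X`. -/
theorem stmt10 {X : Type*} [AddCommGroup X] [Module ℝ X]
    (Φ : ∀ n : ℕ, (Fin n → X) → ((Fin n → ℝ) → ℝ) → X)
    (hadd : ∀ (n : ℕ) (x : Fin n → X) (f g : (Fin n → ℝ) → ℝ),
      MemHn f → MemHn g → Φ n x (f + g) = Φ n x f + Φ n x g)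
    (hsmul : ∀ (n : ℕ) (x : Fin n → X) (c : ℝ) (f : (Fin n → ℝ) → ℝ),
      MemHn f → Φ n x (c • f) = c • Φ n x f)
    (hproj : ∀ (n : ℕ) (x : Fin n → X) (i : Fin n), Φ n x (projFn n i) = x i)
    (hcomp : ∀ (m n : ℕ) (x : Fin n → X) (f : Fin m → ((Fin n → ℝ) → ℝ))
      (g : (Fin m → ℝ) → ℝ), (∀ i, MemHn (f i)) → MemHn g →
      Φ m (fun i => Φ n x (f i)) g = Φ n x (fun t => g (fun i => f i t))) :
    (∀ x : X, Φ 2 ![x, x] sigmaMax = x) ∧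
    (∀ x y : X, Φ 2 ![x, y] sigmaMax = y → Φ 2 ![y, x] sigmaMax = x → x = y) ∧
    (∀ x y z : X, Φ 2 ![x, y] sigmaMax = y → Φ 2 ![y, z] sigmaMax = z →
      Φ 2 ![x, z] sigmaMax = z) := by
  
  refine ⟨?_, ?_, ?_⟩
  · -- reflexivity
    intro x
    have h := hcomp 2 1 ![x] (fun _ => projFn 1 0) sigmaMax
      (fun _ => memHn_proj 0) memHn_sigma
    have hv : (fun i : Fin 2 => Φ 1 ![x] (projFn 1 0)) = ![x, x] := by
      funext i
      fin_cases i <;> simp [hproj 1 ![x] 0]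
    have hg : (fun t : Fin 1 → ℝ => sigmaMax (fun _ : Fin 2 => projFn 1 0 t))
        = projFn 1 0 := by
      funext t; simp [sigmaMax, projFn]
    rw [hv, hg] at h
    rw [h, hproj]
    simp
  · -- antisymmetry
    intro x y hxy hyx
    have h := hcomp 2 2 ![x, y] ![projFn 2 1, projFn 2 0] sigmaMax
      (fun i => by fin_cases i <;> exact memHn_proj _) memHn_sigma
    have hv : (fun i : Fin 2 => Φ 2 ![x, y] (![projFn 2 1, projFn 2 0] i))
        = ![y, x] := by
      funext i
      fin_cases i <;> simp [hproj]
    have hg : (fun t : Fin 2 → ℝ => sigmaMax (fun i => ![projFn 2 1, projFn 2 0] i t))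
        = sigmaMax := by
      funext t
      simp [sigmaMax, projFn, max_comm]
    rw [hv, hg] at h
    rw [h, hxy] at hyx
    exact hyx.symm
  · -- transitivity
    intro x y z hxy hyz
    set v : Fin 3 → X := ![x, y, z] with hvdef
    have hv0 : Φ 3 v (projFn 3 0) = x := by rw [hproj]; simp [hvdef]
    have hv1 : Φ 3 v (projFn 3 1) = y := by rw [hproj]; simp [hvdef]
    have hv2 : Φ 3 v (projFn 3 2) = z := by rw [hproj]; simp [hvdef]
    -- Φ3 v max01 = y
    have h01 : Φ 3 v (fun t => max (t 0) (t 1)) = y := by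
      have h := hcomp 2 3 v ![projFn 3 0, projFn 3 1] sigmaMax
        (fun i => by fin_cases i <;> exact memHn_proj _) memHn_sigma
      have hv : (fun i : Fin 2 => Φ 3 v (![projFn 3 0, projFn 3 1] i)) = ![x, y] := by
        funext i; fin_cases i <;> simp [hv0, hv1]
      have hg : (fun t : Fin 3 → ℝ => sigmaMax (fun i => ![projFn 3 0, projFn 3 1] i t))
          = fun t => max (t 0) (t 1) := by
        funext t; simp [sigmaMax, projFn]
      rw [hv, hg] at h
      rw [← h, hxy]
    -- Φ3 v max12 = z
    have h12 : Φ 3 v (fun t => max (t 1) (t 2)) = z := by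
      have h := hcomp 2 3 v ![projFn 3 1, projFn 3 2] sigmaMax
        (fun i => by fin_cases i <;> exact memHn_proj _) memHn_sigma
      have hv : (fun i : Fin 2 => Φ 3 v (![projFn 3 1, projFn 3 2] i)) = ![y, z] := by
        funext i; fin_cases i <;> simp [hv1, hv2]
      have hg : (fun t : Fin 3 → ℝ => sigmaMax (fun i => ![projFn 3 1, projFn 3 2] i t))
          = fun t => max (t 1) (t 2) := by
        funext t; simp [sigmaMax, projFn]
      rw [hv, hg] at h
      rw [← h, hyz]
    -- Φ3 v (max(max01, π2)) = z, i.e. Φ3 v max012 = z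
    have h012 : Φ 3 v (fun t => max (max (t 0) (t 1)) (t 2)) = z := by
      have h := hcomp 2 3 v ![fun t => max (t 0) (t 1), projFn 3 2] sigmaMax
        (fun i => by fin_cases i; exacts [memHn_max 0 1, memHn_proj _]) memHn_sigma
      have hv : (fun i : Fin 2 => Φ 3 v (![fun t => max (t 0) (t 1), projFn 3 2] i))
          = ![y, z] := by
        funext i; fin_cases i <;> simp [h01, hv2]
      have hg : (fun t : Fin 3 → ℝ =>
          sigmaMax (fun i => ![fun t => max (t 0) (t 1), projFn 3 2] i t))
          = fun t => max (max (t 0) (t 1)) (t 2) := by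
        funext t; simp [sigmaMax, projFn]
      rw [hv, hg] at h
      rw [← h, hyz]
    -- Finally Φ2 ![x,z] σ = Φ3 v (max(π0, max12)) = Φ3 v max012 = z
    have h := hcomp 2 3 v ![projFn 3 0, fun t => max (t 1) (t 2)] sigmaMax
      (fun i => by fin_cases i; exacts [memHn_proj _, memHn_max 1 2]) memHn_sigma
    have hv : (fun i : Fin 2 => Φ 3 v (![projFn 3 0, fun t => max (t 1) (t 2)] i))
        = ![x, z] := by
      funext i; fin_cases i <;> simp [hv0, h12]
    have hg : (fun t : Fin 3 → ℝ =>
        sigmaMax (fun i => ![projFn 3 0, fun t => max (t 1) (t 2)] i t))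
        = fun t => max (max (t 0) (t 1)) (t 2) := by
      funext t; simp [sigmaMax, projFn, max_assoc]
    rw [hv, hg] at h
    rw [h, h012]
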